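/- Let h : [0,∞) → (0,∞) be differentiable with h(0) = 1, and let δ : [0,∞) → (0,∞) be differentiable with δ(0) = 1. If h(t+a) = h(a)·h(t/δ(a)) for all t, a ≥ 0, then h satisfies the differential equation (1 + βt)·h'(t) = α·h(t) for all t ≥ 0, where α = h'(0) and β = δ'(0). -/

import Mathlib

open Set

/-- If `h(t+a) = h(a) h(t/δ(a))` on `[0,∞)` with `h(0) = δ(0) = 1`, `h, δ > 0`
and differentiable, then `(1 + βt) h'(t) = α h(t)` with `α = h'(0)`, `β = δ'(0)`
(one-sided derivatives on `[0,∞)`). -/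
theorem functional_equation_to_ode (h δ : ℝ → ℝ)
    (hpos : ∀ t, 0 ≤ t → 0 < h t) (δpos : ∀ t, 0 ≤ t → 0 < δ t)
    (hdiff : DifferentiableOn ℝ h (Ici 0)) (δdiff : DifferentiableOn ℝ δ (Ici 0))
    (h0 : h 0 = 1) (δ0 : δ 0 = 1)
    (hfe : ∀ t a, 0 ≤ t → 0 ≤ a → h (t + a) = h a * h (t / δ a)) :
    ∀ t, 0 ≤ t →
      (1 + derivWithin δ (Ici 0) 0 * t) * derivWithin h (Ici 0) t =
        derivWithin h (Ici 0) 0 * h t := by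
  intro t ht
  have hu : UniqueDiffWithinAt ℝ (Ici (0:ℝ)) 0 := uniqueDiffOn_Ici 0 0 (mem_Ici.2 le_rfl)
  set α := derivWithin h (Ici 0) 0 with hα
  set β := derivWithin δ (Ici 0) 0 with hβ
  set γ := derivWithin h (Ici 0) t with hγ
  have Hht : HasDerivWithinAt h γ (Ici 0) t := (hdiff t (mem_Ici.2 ht)).hasDerivWithinAt
  have Hh0 : HasDerivWithinAt h α (Ici 0) 0 := (hdiff 0 (mem_Ici.2 le_rfl)).hasDerivWithinAt
  have Hδ0 : HasDerivWithinAt δ β (Ici 0) 0 := (δdiff 0 (mem_Ici.2 le_rfl)).hasDerivWithinAt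
  -- derivative of a ↦ h (t + a) at 0 is γ
  have H1 : HasDerivWithinAt (fun a => h (t + a)) γ (Ici 0) 0 := by
    have hmaps : MapsTo (fun a : ℝ => t + a) (Ici 0) (Ici 0) := fun a ha => by
      simp only [mem_Ici] at *; linarith
    have hinner : HasDerivWithinAt (fun a : ℝ => t + a) 1 (Ici 0) 0 :=
      (hasDerivWithinAt_id (0:ℝ) (Ici 0)).const_add t
    have Hht' : HasDerivWithinAt h γ (Ici 0) ((fun a : ℝ => t + a) 0) := by
      simpa using Hht
    have hc := Hht'.comp (0:ℝ) hinner hmaps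
    rw [mul_one] at hc
    exact hc
  -- derivative of a ↦ t / δ a at 0 is -(t*β)
  have Hinner2 : HasDerivWithinAt (fun a => t / δ a) (-(t * β)) (Ici 0) 0 := by
    have := (hasDerivWithinAt_const (0:ℝ) (Ici 0) t).div Hδ0 (by rw [δ0]; norm_num)
    convert this using 1 <;> try rfl
    rw [δ0]; ring
  -- derivative of a ↦ h (t / δ a) at 0 is γ * (-(t*β))
  have H2i : HasDerivWithinAt (fun a => h (t / δ a)) (γ * -(t * β)) (Ici 0) 0 := by
    have hmaps : MapsTo (fun a : ℝ => t / δ a) (Ici 0) (Ici 0) := fun a ha =>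
      mem_Ici.2 (div_nonneg ht (δpos a ha).le)
    have Hht' : HasDerivWithinAt h γ (Ici 0) ((fun a : ℝ => t / δ a) 0) := by
      simp only [δ0, div_one]; exact Hht
    exact Hht'.comp (0:ℝ) Hinner2 hmaps
  have H2 : HasDerivWithinAt (fun a => h a * h (t / δ a))
      (α * h (t / δ 0) + h 0 * (γ * -(t * β))) (Ici 0) 0 := Hh0.mul H2i
  have heq : derivWithin (fun a => h (t + a)) (Ici 0) 0
      = derivWithin (fun a => h a * h (t / δ a)) (Ici 0) 0 :=
    derivWithin_congr (fun a ha => hfe t a ht ha) (hfe t 0 ht le_rfl)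
  have e1 := H1.derivWithin hu
  have e2 := H2.derivWithin hu
  rw [heq, e2] at e1
  rw [δ0, div_one, h0] at e1
  -- e1 : γ = α * h t + 1 * (γ * -(t * β))
  have : (1 + β * t) * γ = α * h t := by linarith [e1]
  simpa [hγ] using this
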